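/- Let K > 0 and R ≥ 1. Suppose u : ℝ² → ℝ is continuously differentiable on {x ∈ ℝ² : |x| ≥ R} and satisfies |⟨x, ∇u(x)⟩ − u(x)| ≤ K/|x| for all |x| ≥ R. Then for every unit vector ω ∈ S¹ the limit c(ω) := lim_{r→∞} u(rω)/r exists, the function c : S¹ → ℝ is continuous, and for all r ≥ R and all ω ∈ S¹ one has |u(rω) − c(ω)·r| ≤ K/(2r). -/

import Mathlib

open Metric Filter Topology

private lemma radial_aux_deriv (K R : ℝ) (hR : 1 ≤ R)
    (u : EuclideanSpace ℝ (Fin 2) → ℝ)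
    (hreg : ContDiffOn ℝ 1 u {x : EuclideanSpace ℝ (Fin 2) | R ≤ ‖x‖})
    (hder : ∀ x : EuclideanSpace ℝ (Fin 2), R ≤ ‖x‖ →
      |(inner ℝ x (gradient u x) : ℝ) - u x| ≤ K / ‖x‖)
    (w : EuclideanSpace ℝ (Fin 2)) (hw : ‖w‖ = 1) {r : ℝ} (hr : R < r) :
    ∃ d : ℝ, HasDerivAt (fun t : ℝ => u (t • w) / t) d r ∧ |d| ≤ K / r ^ 3 := by
  have hr0 : (0:ℝ) < r := lt_of_lt_of_le (lt_of_lt_of_le one_pos hR) hr.le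
  set x := r • w with hx
  have hxn : ‖x‖ = r := by
    rw [hx, norm_smul, hw, mul_one, Real.norm_eq_abs, abs_of_pos hr0]
  have hmem : {y : EuclideanSpace ℝ (Fin 2) | R ≤ ‖y‖} ∈ 𝓝 x := by
    apply mem_of_superset
      ((isOpen_lt continuous_const continuous_norm).mem_nhds
        (by simpa [Set.mem_setOf_eq, hxn] using hr))
    exact fun y hy => le_of_lt (show R < ‖y‖ from hy)
  have hd : DifferentiableAt ℝ u x := (hreg.contDiffAt hmem).differentiableAt one_ne_zero
  have hfd : HasFDerivAt u (InnerProductSpace.toDual ℝ _ (gradient u x)) x :=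
    hd.hasGradientAt.hasFDerivAt
  have hline : HasDerivAt (fun t : ℝ => t • w) w r := by
    simpa using (hasDerivAt_id r).smul_const w
  have hcomp : HasDerivAt (fun t : ℝ => u (t • w)) (inner ℝ (gradient u x) w : ℝ) r := by
    simpa only [Function.comp_def, InnerProductSpace.toDual_apply_apply] using hfd.comp_hasDerivAt r hline
  have hdiv : HasDerivAt (fun t : ℝ => u (t • w) / t)
      (((inner ℝ (gradient u x) w : ℝ) * r - u x * 1) / r ^ 2) r :=
    hcomp.div (hasDerivAt_id r) hr0.ne'
  refine ⟨_, hdiv, ?_⟩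
  have hip : |(inner ℝ (gradient u x) w : ℝ) * r - u x * 1|
      = |(inner ℝ x (gradient u x) : ℝ) - u x| := by
    rw [hx, real_inner_smul_left, real_inner_comm, mul_one, mul_comm]
  have hb := hder x (by rw [hxn]; exact hr.le)
  rw [hxn] at hb
  rw [abs_div, hip, abs_of_pos (by positivity : (0:ℝ) < r ^ 2)]
  calc |(inner ℝ x (gradient u x) : ℝ) - u x| / r ^ 2 ≤ (K / r) / r ^ 2 := by gcongr
    _ = K / r ^ 3 := by rw [div_div]; ring_nf

private lemma radial_aux_main (K R : ℝ) (hK : 0 < K) (hR : 1 ≤ R)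
    (u : EuclideanSpace ℝ (Fin 2) → ℝ)
    (hreg : ContDiffOn ℝ 1 u {x : EuclideanSpace ℝ (Fin 2) | R ≤ ‖x‖})
    (hder : ∀ x : EuclideanSpace ℝ (Fin 2), R ≤ ‖x‖ →
      |(inner ℝ x (gradient u x) : ℝ) - u x| ≤ K / ‖x‖)
    (w : EuclideanSpace ℝ (Fin 2)) (hw : ‖w‖ = 1) :
    ∃ cw : ℝ, Tendsto (fun r : ℝ => u (r • w) / r) atTop (nhds cw) ∧
      ∀ r : ℝ, R < r → |u (r • w) / r - cw| ≤ K / (2 * r ^ 2) := by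
  have hR0 : (0:ℝ) < R := lt_of_lt_of_le one_pos hR
  set g : ℝ → ℝ := fun t => u (t • w) / t with hg
  set m : ℝ → ℝ := fun t => K / (2 * t ^ 2) with hmdef
  have key : ∀ t : ℝ, R < t → ∃ d : ℝ, HasDerivAt g d t ∧ |d| ≤ K / t ^ 3 :=
    fun t ht => radial_aux_deriv K R hR u hreg hder w hw ht
  have ht0 : ∀ t : ℝ, R < t → (0:ℝ) < t := fun t ht => lt_trans hR0 ht
  have hm : ∀ t : ℝ, 0 < t → HasDerivAt m (-(K / t ^ 3)) t := by
    intro t ht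
    have hv : HasDerivAt (fun s : ℝ => 2 * s ^ 2) (2 * (2 * t)) t := by
      simpa [mul_comm, mul_assoc] using (hasDerivAt_pow 2 t).const_mul 2
    have h2 : HasDerivAt (fun s : ℝ => K / (2 * s ^ 2))
        ((0 * (2 * t ^ 2) - K * (2 * (2 * t))) / (2 * t ^ 2) ^ 2) t :=
      (hasDerivAt_const t K).div hv (by positivity)
    convert h2 using 1
    have ht' : t ≠ 0 := ht.ne'
    field_simp
    ring
  have hmono : MonotoneOn (fun t => g t - m t) (Set.Ioi R) := by
    apply monotoneOn_of_deriv_nonneg (convex_Ioi R)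
    · intro t ht
      obtain ⟨d, hd, _⟩ := key t ht
      exact ((hd.sub (hm t (ht0 t ht))).continuousAt).continuousWithinAt
    · rw [interior_Ioi]
      intro t ht
      obtain ⟨d, hd, _⟩ := key t ht
      exact ((hd.sub (hm t (ht0 t ht))).differentiableAt).differentiableWithinAt
    · rw [interior_Ioi]
      intro t ht
      obtain ⟨d, hd, hdb⟩ := key t ht
      rw [show (fun t => g t - m t) = g - m from rfl, (hd.sub (hm t (ht0 t ht))).deriv]
      have := abs_le.1 hdb
      linarith [this.1]
  have hanti : AntitoneOn (fun t => g t + m t) (Set.Ioi R) := by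
    apply antitoneOn_of_deriv_nonpos (convex_Ioi R)
    · intro t ht
      obtain ⟨d, hd, _⟩ := key t ht
      exact ((hd.add (hm t (ht0 t ht))).continuousAt).continuousWithinAt
    · rw [interior_Ioi]
      intro t ht
      obtain ⟨d, hd, _⟩ := key t ht
      exact ((hd.add (hm t (ht0 t ht))).differentiableAt).differentiableWithinAt
    · rw [interior_Ioi]
      intro t ht
      obtain ⟨d, hd, hdb⟩ := key t ht
      rw [show (fun t => g t + m t) = g + m from rfl, (hd.add (hm t (ht0 t ht))).deriv]
      have := abs_le.1 hdb
      linarith [this.2]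
  have hest : ∀ a b : ℝ, R < a → a ≤ b → |g b - g a| ≤ m a := by
    intro a b ha hab
    have hb : R < b := lt_of_lt_of_le ha hab
    have h1 := hmono (Set.mem_Ioi.2 ha) (Set.mem_Ioi.2 hb) hab
    have h2 := hanti (Set.mem_Ioi.2 ha) (Set.mem_Ioi.2 hb) hab
    have hmb : 0 ≤ m b := by
      have : (0:ℝ) < b := ht0 b hb
      positivity
    rw [abs_sub_le_iff]
    constructor <;> [skip; skip] <;> simp only at h1 h2 <;> linarith
  have hm0 : Tendsto m atTop (nhds 0) := by
    have h1 : Tendsto (fun t : ℝ => 2 * t ^ 2) atTop atTop :=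
      (tendsto_pow_atTop two_ne_zero).const_mul_atTop two_pos
    have h2 : Tendsto (fun t : ℝ => ((2 * t ^ 2)⁻¹ : ℝ)) atTop (nhds 0) := by
      simpa [Pi.inv_def] using h1.inv_tendsto_atTop
    have h3 := h2.const_mul K
    simpa [hmdef, div_eq_mul_inv] using h3
  have hcauchy : CauchySeq g := by
    rw [Metric.cauchySeq_iff']
    intro ε hε
    have hev : ∀ᶠ t : ℝ in atTop, m t < ε ∧ R < t :=
      (hm0.eventually (gt_mem_nhds hε)).and (eventually_gt_atTop R)
    obtain ⟨N, hN⟩ := hev.exists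
    exact ⟨N, fun n hn => by
      rw [Real.dist_eq]
      exact lt_of_le_of_lt (hest N n hN.2 hn) hN.1⟩
  obtain ⟨cw, hcw⟩ := cauchySeq_tendsto_of_complete hcauchy
  refine ⟨cw, hcw, fun r hr => ?_⟩
  have h1 : ∀ᶠ b : ℝ in atTop, |g b - g r| ≤ m r := by
    filter_upwards [eventually_ge_atTop r] with b hb using hest r b hr hb
  have h2 : Tendsto (fun b => |g b - g r|) atTop (nhds (|cw - g r|)) :=
    (hcw.sub_const (g r)).abs
  have h3 := le_of_tendsto h2 h1
  rw [abs_sub_comm] at h3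
  exact h3

theorem stmt_1 (K R : ℝ) (hK : 0 < K) (hR : 1 ≤ R)
    (u : EuclideanSpace ℝ (Fin 2) → ℝ)
    (hreg : ContDiffOn ℝ 1 u {x : EuclideanSpace ℝ (Fin 2) | R ≤ ‖x‖})
    (hder : ∀ x : EuclideanSpace ℝ (Fin 2), R ≤ ‖x‖ →
      |(inner ℝ x (gradient u x) : ℝ) - u x| ≤ K / ‖x‖) :
    ∃ c : EuclideanSpace ℝ (Fin 2) → ℝ,
      ContinuousOn c (sphere (0 : EuclideanSpace ℝ (Fin 2)) 1) ∧
      (∀ w : EuclideanSpace ℝ (Fin 2), ‖w‖ = 1 →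
        Tendsto (fun r : ℝ => u (r • w) / r) atTop (nhds (c w))) ∧
      (∀ r : ℝ, R ≤ r → ∀ w : EuclideanSpace ℝ (Fin 2), ‖w‖ = 1 →
        |u (r • w) - c w * r| ≤ K / (2 * r)) := by
  have hR0 : (0:ℝ) < R := lt_of_lt_of_le one_pos hR
  choose! c hc1 hc2 using radial_aux_main K R hK hR u hreg hder
  have hm0 : Tendsto (fun t : ℝ => K / (2 * t ^ 2)) atTop (nhds 0) := by
    have h1 : Tendsto (fun t : ℝ => 2 * t ^ 2) atTop atTop :=
      (tendsto_pow_atTop two_ne_zero).const_mul_atTop two_pos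
    have h2 : Tendsto (fun t : ℝ => ((2 * t ^ 2)⁻¹ : ℝ)) atTop (nhds 0) := by
      simpa [Pi.inv_def] using h1.inv_tendsto_atTop
    simpa [div_eq_mul_inv] using h2.const_mul K
  -- strict-inequality case of the quantitative bound
  have hstrict : ∀ r : ℝ, R < r → ∀ w : EuclideanSpace ℝ (Fin 2), ‖w‖ = 1 →
      |u (r • w) - c w * r| ≤ K / (2 * r) := by
    intro r hr w hw
    have hr0 : (0:ℝ) < r := lt_trans hR0 hr
    have h := hc2 w hw r hr
    have heq : u (r • w) - c w * r = (u (r • w) / r - c w) * r := by field_simp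
    rw [heq, abs_mul, abs_of_pos hr0]
    calc |u (r • w) / r - c w| * r ≤ (K / (2 * r ^ 2)) * r := by gcongr
      _ = K / (2 * r) := by field_simp
  refine ⟨c, ?_, hc1, ?_⟩
  · -- continuity via uniform convergence
    apply TendstoUniformlyOn.continuousOn
      (F := fun (r : ℝ) (w : EuclideanSpace ℝ (Fin 2)) => u (r • w) / r) (p := atTop)
    · rw [Metric.tendstoUniformlyOn_iff]
      intro ε hε
      filter_upwards [hm0.eventually (gt_mem_nhds hε), eventually_gt_atTop R] with r h1 h2
      intro w hw
      have hw1 : ‖w‖ = 1 := by simpa using hw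
      rw [Real.dist_eq, abs_sub_comm]
      exact lt_of_le_of_lt (hc2 w hw1 r h2) h1
    · apply Filter.Eventually.frequently
      filter_upwards [eventually_ge_atTop R] with r hr
      apply ContinuousOn.div_const
      apply hreg.continuousOn.comp (Continuous.continuousOn (continuous_const_smul _))
      intro w hw
      have hw1 : ‖w‖ = 1 := by simpa using hw
      simp only [Set.mem_setOf_eq, norm_smul, hw1, mul_one, Real.norm_eq_abs]
      rwa [abs_of_nonneg (le_trans hR0.le hr)]
  · intro r hr w hw
    rcases eq_or_lt_of_le hr with heq | hlt
    · -- boundary case r = R via continuity from the right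
      subst heq
      have hcontu : ContinuousOn (fun t : ℝ => u (t • w)) (Set.Ici R) := by
        apply hreg.continuousOn.comp
          (Continuous.continuousOn (continuous_id.smul continuous_const))
        intro t ht
        simp only [Set.mem_setOf_eq, Pi.smul_apply', id_eq, norm_smul, hw, mul_one, Real.norm_eq_abs]
        rwa [abs_of_nonneg (le_trans hR0.le ht)]
      have hF : ContinuousWithinAt (fun t : ℝ => |u (t • w) - c w * t|) (Set.Ici R) R := by
        apply ContinuousWithinAt.abs
        exact (hcontu.continuousWithinAt Set.self_mem_Ici).sub
          ((continuous_const.mul continuous_id).continuousWithinAt)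
      have hlim1 : Tendsto (fun t : ℝ => |u (t • w) - c w * t|) (nhdsWithin R (Set.Ioi R))
          (nhds (|u (R • w) - c w * R|)) :=
        hF.mono_left (nhdsWithin_mono _ Set.Ioi_subset_Ici_self)
      have hlim2 : Tendsto (fun t : ℝ => K / (2 * t)) (nhdsWithin R (Set.Ioi R))
          (nhds (K / (2 * R))) := by
        apply Tendsto.mono_left ?_ nhdsWithin_le_nhds
        exact (continuousAt_const.div (continuousAt_const.mul continuousAt_id)
          (mul_ne_zero two_ne_zero hR0.ne')).tendsto
      refine le_of_tendsto_of_tendsto hlim1 hlim2 ?_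
      filter_upwards [self_mem_nhdsWithin] with t ht
      exact hstrict t ht w hw
    · exact hstrict r hlt w hw
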